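/- Let β be a real number with 0 < β < β_h − d_f/2, and assume that ∑_{n≥0} α^{−2nβ} ∑_{k=1}^{N^{n+1}} (ξ^{(n+1)}_k)² < ∞. Then the series ∑_{n≥0} sup_{z∈Z} |S^{(n+1)}(z) − S^{(n)}(z)| converges; consequently the functions S^{(n)} converge uniformly on Z to a continuous function η : Z → ℝ. -/

import Mathlib

open MeasureTheory Filter Set

/-- Context: `(X,d)` a metric space, `α > 1`, `N ≥ 2`, `d_f = log N / log α`.  For each `n ≥ 0`
nonempty sets `E n k ⊆ X` (`k` among `N^n` indices) of diameter at most `α^{ -n}`, with a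
parent map `c` such that `E (n+1) k ⊆ E n (c n k)`; real numbers `ξ n k` additive under
refinement; points `y n k ∈ E n k`; `Z` a topological space; `h : Z × X → ℝ` bounded,
continuous in the first variable, and Hölder in the second with exponent `β_h > d_f/2` and
constant `K_h > 0`; and `S n z = ∑_{k} h(z, y n k) ξ n k`.

Claim: if `0 < β < β_h − d_f/2` and `∑_{n≥0} α^{−2nβ} ∑_k (ξ^{(n+1)}_k)² < ∞`, then the
series `∑_{n≥0} sup_z |S^{(n+1)}(z) − S^{(n)}(z)|` converges; consequently the `S^{(n)}`
converge uniformly on `Z` to a continuous function `η : Z → ℝ`. -/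
theorem statement0
    {X : Type*} [MetricSpace X] {Z : Type*} [TopologicalSpace Z]
    (α : ℝ) (hα : 1 < α) (N : ℕ) (hN : 2 ≤ N)
    (E : ∀ n : ℕ, Fin (N ^ n) → Set X)
    (hE_ne : ∀ n k, (E n k).Nonempty)
    (hE_diam : ∀ n k, EMetric.diam (E n k) ≤ ENNReal.ofReal ((α ^ n)⁻¹))
    (c : ∀ n : ℕ, Fin (N ^ (n + 1)) → Fin (N ^ n))
    (hc : ∀ n k, E (n + 1) k ⊆ E n (c n k))
    (ξ : ∀ n : ℕ, Fin (N ^ n) → ℝ)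
    (hξ : ∀ n k', ξ n k' = ∑ k ∈ Finset.univ.filter (fun k => c n k = k'), ξ (n + 1) k)
    (y : ∀ n : ℕ, Fin (N ^ n) → X)
    (hy : ∀ n k, y n k ∈ E n k)
    (h : Z → X → ℝ)
    (Mh : ℝ) (h_bdd : ∀ z x, |h z x| ≤ Mh)
    (h_cont : ∀ x, Continuous fun z => h z x)
    (Kh βh : ℝ) (hKh : 0 < Kh)
    (hβh : Real.log N / Real.log α / 2 < βh)
    (h_hold : ∀ z (y₁ y₂ : X), |h z y₁ - h z y₂| ≤ Kh * dist y₁ y₂ ^ βh)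
    (S : ℕ → Z → ℝ)
    (hS : ∀ n z, S n z = ∑ k, h z (y n k) * ξ n k)
    (β : ℝ) (hβ0 : 0 < β) (hβ : β < βh - Real.log N / Real.log α / 2)
    (hsum : Summable fun n : ℕ =>
      α ^ (-(2 * (n : ℝ) * β)) * ∑ k, (ξ (n + 1) k) ^ 2) :
    (Summable fun n : ℕ => ⨆ z : Z, |S (n + 1) z - S n z|) ∧
      ∃ η : Z → ℝ, Continuous η ∧ TendstoUniformly S η atTop := by
  have hα0 : (0:ℝ) < α := lt_trans one_pos hα
  have hlα : 0 < Real.log α := Real.log_pos hα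
  have hN1 : (1:ℝ) < (N:ℝ) := by exact_mod_cast lt_of_lt_of_le one_lt_two (by exact_mod_cast hN)
  have hlN : 0 < Real.log N := Real.log_pos hN1
  set df : ℝ := Real.log N / Real.log α with hdf
  have hdf0 : 0 < df := div_pos hlN hlα
  have hβh0 : 0 < βh := lt_trans (by positivity) hβh
  -- N = α ^ df
  have hNα : (N:ℝ) = α ^ df := by
    rw [Real.rpow_def_of_pos hα0, hdf, mul_div_assoc', mul_comm, mul_div_assoc,
      div_self hlα.ne', mul_one, Real.exp_log (by positivity)]
  set Q : ℕ → ℝ := fun n => ∑ k, (ξ (n + 1) k) ^ 2 with hQ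
  have hQ0 : ∀ n, 0 ≤ Q n := fun n => Finset.sum_nonneg fun k _ => sq_nonneg _
  set u : ℕ → ℝ := fun n => α ^ (-(2 * (n : ℝ) * β)) * Q n with hu
  have hu0 : ∀ n, 0 ≤ u n := fun n => mul_nonneg (Real.rpow_nonneg hα0.le _) (hQ0 n)
  set r : ℝ := (N:ℝ) * α ^ (2*β - 2*βh) with hr
  have hr0 : 0 ≤ r := mul_nonneg (by positivity) (Real.rpow_nonneg hα0.le _)
  have hr1 : r < 1 := by
    rw [hr, hNα, ← Real.rpow_add hα0]
    exact Real.rpow_lt_one_of_one_lt_of_neg hα (by linarith)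
  set b : ℕ → ℝ := fun n =>
    Kh * (α ^ (-(n:ℝ) * βh) * Real.sqrt ((N:ℝ)^(n+1) * Q n)) with hb
  have hb0 : ∀ n, 0 ≤ b n := fun n =>
    mul_nonneg hKh.le (mul_nonneg (Real.rpow_nonneg hα0.le _) (Real.sqrt_nonneg _))
  -- key exponent identity
  have hexp : ∀ n : ℕ, (α ^ (-(n:ℝ) * βh))^2 * (N:ℝ)^(n+1) * Q n
      = (N:ℝ) * (r ^ n * u n) := by
    intro n
    have e1 : (α ^ ((2*β-2*βh)) : ℝ)^n = α ^ ((2*β-2*βh) * (n:ℝ)) := by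
      rw [← Real.rpow_natCast (α ^ ((2*β-2*βh)) : ℝ) n, ← Real.rpow_mul hα0.le]
    have e2 : (α ^ (-(n:ℝ) * βh) : ℝ)^2 = α ^ (-(n:ℝ) * βh * 2) := by
      rw [← Real.rpow_natCast (α ^ (-(n:ℝ) * βh) : ℝ) 2, ← Real.rpow_mul hα0.le]
      norm_num
    have e4 : α ^ ((2*β-2*βh) * (n:ℝ)) * α ^ (-(2 * (n:ℝ) * β)) = α ^ (-(n:ℝ) * βh * 2) := by
      rw [← Real.rpow_add hα0]; congr 1; ring
    simp only [hr, hu, mul_pow, e1, e2, pow_succ]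
    rw [← e4]; ring
  -- summability of b
  have hbsum : Summable b := by
    have maj : Summable (fun n => Kh * Real.sqrt N * ((r ^ n + u n)/2)) :=
      (((summable_geometric_of_lt_one hr0 hr1).add hsum).div_const 2).mul_left _
    refine maj.of_nonneg_of_le hb0 (fun n => ?_)
    have e3 : b n = Kh * Real.sqrt ((N:ℝ) * (r ^ n * u n)) := by
      simp only [hb]
      have : (α ^ (-(n:ℝ) * βh)) * Real.sqrt ((N:ℝ)^(n+1) * Q n)
          = Real.sqrt ((α ^ (-(n:ℝ) * βh))^2 * ((N:ℝ)^(n+1) * Q n)) := by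
        rw [Real.sqrt_mul (sq_nonneg _), Real.sqrt_sq (Real.rpow_nonneg hα0.le _)]
      rw [this, ← mul_assoc, hexp n]
    rw [e3, Real.sqrt_mul (by positivity : (0:ℝ) ≤ (N:ℝ))]
    rw [mul_assoc]
    refine mul_le_mul_of_nonneg_left (mul_le_mul_of_nonneg_left ?_ (Real.sqrt_nonneg _)) hKh.le
    have h1 : Real.sqrt (r^n * u n) = Real.sqrt (r^n) * Real.sqrt (u n) :=
      Real.sqrt_mul (by positivity) _
    have h2 := Real.sq_sqrt (pow_nonneg hr0 n)
    have h3 := Real.sq_sqrt (hu0 n)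
    nlinarith [sq_nonneg (Real.sqrt (r^n) - Real.sqrt (u n)), Real.sqrt_nonneg (r^n),
      Real.sqrt_nonneg (u n)]
  -- telescoping identity
  have hdiff : ∀ (n : ℕ) (z : Z), S (n+1) z - S n z
      = ∑ k : Fin (N^(n+1)), (h z (y (n+1) k) - h z (y n (c n k))) * ξ (n+1) k := by
    intro n z
    have hSn : S n z = ∑ k : Fin (N^(n+1)), h z (y n (c n k)) * ξ (n+1) k := by
      rw [hS, ← Finset.sum_fiberwise Finset.univ (c n)
        (fun k => h z (y n (c n k)) * ξ (n + 1) k)]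
      refine Finset.sum_congr rfl fun j _ => ?_
      rw [hξ n j, Finset.mul_sum]
      refine Finset.sum_congr rfl fun k hk => ?_
      rw [(Finset.mem_filter.1 hk).2]
    rw [hS (n+1), hSn, ← Finset.sum_sub_distrib]
    exact Finset.sum_congr rfl fun k _ => by ring
  -- pointwise bound
  have hbound : ∀ (n : ℕ) (z : Z), |S (n+1) z - S n z| ≤ b n := by
    intro n z
    rw [hdiff n z]
    calc |∑ k : Fin (N^(n+1)), (h z (y (n+1) k) - h z (y n (c n k))) * ξ (n + 1) k|
        ≤ ∑ k : Fin (N^(n+1)), |(h z (y (n+1) k) - h z (y n (c n k))) * ξ (n + 1) k| :=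
          Finset.abs_sum_le_sum_abs _ _
      _ ≤ ∑ k : Fin (N^(n+1)), Kh * α ^ (-(n:ℝ) * βh) * |ξ (n + 1) k| := by
          refine Finset.sum_le_sum fun k _ => ?_
          rw [abs_mul]
          refine mul_le_mul_of_nonneg_right ?_ (abs_nonneg _)
          refine le_trans (h_hold z _ _) ?_
          have hmem1 : y (n+1) k ∈ E n (c n k) := hc n k (hy (n+1) k)
          have hmem2 : y n (c n k) ∈ E n (c n k) := hy n (c n k)
          have hd : dist (y (n+1) k) (y n (c n k)) ≤ (α ^ n)⁻¹ := by
            have he : edist (y (n+1) k) (y n (c n k)) ≤ ENNReal.ofReal ((α ^ n)⁻¹) :=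
              le_trans (EMetric.edist_le_diam_of_mem hmem1 hmem2) (hE_diam n (c n k))
            rw [dist_edist]
            exact ENNReal.toReal_le_of_le_ofReal (by positivity) he
          refine mul_le_mul_of_nonneg_left ?_ hKh.le
          have : ((α ^ n)⁻¹ : ℝ) = α ^ (-(n:ℝ)) := by
            rw [Real.rpow_neg hα0.le, Real.rpow_natCast]
          calc dist (y (n+1) k) (y n (c n k)) ^ βh ≤ ((α ^ n)⁻¹) ^ βh :=
                Real.rpow_le_rpow dist_nonneg hd hβh0.le
            _ = α ^ (-(n:ℝ) * βh) := by rw [this, ← Real.rpow_mul hα0.le]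
      _ = Kh * α ^ (-(n:ℝ) * βh) * ∑ k, |ξ (n + 1) k| := by rw [← Finset.mul_sum]
      _ ≤ b n := by
          rw [hb, mul_assoc]
          refine mul_le_mul_of_nonneg_left (mul_le_mul_of_nonneg_left ?_
            (Real.rpow_nonneg hα0.le _)) hKh.le
          -- Cauchy-Schwarz: ∑|ξ| ≤ sqrt(N^(n+1) * Q n)
          have hcs : (∑ k, |ξ (n + 1) k|) ^ 2 ≤ (N:ℝ)^(n+1) * Q n := by
            have := sq_sum_le_card_mul_sum_sq (s := (Finset.univ : Finset (Fin (N^(n+1)))))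
              (f := fun k => |ξ (n + 1) k|)
            simp only [Finset.card_univ, Fintype.card_fin, sq_abs] at this
            calc (∑ k, |ξ (n + 1) k|) ^ 2 ≤ (N^(n+1) : ℕ) * ∑ k, ξ (n + 1) k ^ 2 := this
              _ = (N:ℝ)^(n+1) * Q n := by push_cast; ring
          have := Real.sqrt_le_sqrt hcs
          rwa [Real.sqrt_sq (Finset.sum_nonneg fun k _ => abs_nonneg _)] at this
  -- summability of sups
  have hsupsum : Summable fun n : ℕ => ⨆ z : Z, |S (n + 1) z - S n z| := by
    refine hbsum.of_nonneg_of_le (fun n => Real.iSup_nonneg fun z => abs_nonneg _)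
      (fun n => Real.iSup_le (fun z => hbound n z) (hb0 n))
  refine ⟨hsupsum, ?_⟩
  -- uniform convergence
  have hScont : ∀ n, Continuous (S n) := by
    intro n
    have : S n = fun z => ∑ k, h z (y n k) * ξ n k := funext (hS n)
    rw [this]
    exact continuous_finset_sum _ fun k _ => (h_cont _).mul continuous_const
  set g : ℕ → Z → ℝ := fun n z => S (n+1) z - S n z with hg
  have HU : TendstoUniformly (fun t z => ∑ n ∈ Finset.range t, g n z)
      (fun z => ∑' n, g n z) atTop :=
    tendstoUniformly_tsum_nat hbsum (fun n z => by
      simpa [Real.norm_eq_abs] using hbound n z)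
  have htsum_cont : Continuous fun z => ∑' n, g n z := by
    refine HU.continuous (Frequently.of_forall fun t => ?_)
    exact continuous_finset_sum _ fun i _ => (hScont (i+1)).sub (hScont i)
  refine ⟨fun z => S 0 z + ∑' n, g n z, (hScont 0).add htsum_cont, ?_⟩
  rw [Metric.tendstoUniformly_iff] at HU ⊢
  intro ε hε
  filter_upwards [HU ε hε] with n hn z
  have htel : ∑ i ∈ Finset.range n, g i z = S n z - S 0 z := by
    simp only [hg]
    exact Finset.sum_range_sub (fun i => S i z) n
  have h2 := hn z
  simp only [Real.dist_eq] at h2 ⊢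
  have e : (S 0 z + ∑' m, g m z) - S n z = (∑' m, g m z) - ∑ i ∈ Finset.range n, g i z := by
    rw [htel]; ring
  rw [e]
  exact h2
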